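/- arXiv:2602.17355 — 2 statements merged into one kernel-verified Lean document; each statement's English description precedes it below -/
import Mathlib

section
/- Let G be a group regarded as a one-object category. The map from the underlying set of G to the set of objects of D_G that sends the identity element e to the identity morphism of the unique object of F_≃(G) and sends each g ∈ G ∖ {e} to the free isomorphism [g] is a bijection onto the objects of D_G. -/
open CategoryTheory

universe u

namespace Unrolling

/-- A morphism is "an identity" if it is the `eqToHom` of an equality of objects. -/
def IsIdArrow {C : Type*} [Category C] {x y : C} (m : x ⟶ y) : Prop :=
  ∃ h : x = y, m = eqToHom h

/-- A morphism lies in the image of the functor `F` (up to the evident equalities of objects). -/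
def InImg {A C : Type*} [Category A] [Category C] (F : A ⥤ C) {x y : C} (m : x ⟶ y) : Prop :=
  ∃ (a b : A) (k : a ⟶ b) (ha : F.obj a = x) (hb : F.obj b = y),
    m = eqToHom ha.symm ≫ F.map k ≫ eqToHom hb

/-- The free category comonad applied to a functor `c : A ⥤ B`, i.e. the induced functor
between path categories. -/
def freeMap {A B : Type*} [Category A] [Category B] (c : A ⥤ B) : Paths A ⥤ Paths B where
  obj x := c.obj x
  map f := c.toPrefunctor.mapPath f
  map_id _ := rfl
  map_comp f g := c.toPrefunctor.mapPath_comp f g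

/-- A "free isomorphism": the image under `i : Paths R ⥤ F_≃(R)` of a length-one path whose
arrow is an isomorphism of `R`. -/
def FreeIso {R Fs : Type*} [Category R] [Category Fs] (i : Paths R ⥤ Fs)
    {x y : Fs} (m : x ⟶ y) : Prop :=
  ∃ (a b : R) (f : a ⟶ b) (ha : i.obj ((Paths.of R).obj a) = x) (hb : i.obj ((Paths.of R).obj b) = y),
    IsIso f ∧ m = eqToHom ha.symm ≫ i.map ((Paths.of R).map f) ≫ eqToHom hb

/-- The twisted arrow category of `C`: objects are morphisms of `C`. -/
structure Tw (C : Type*) [Category C] where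
  left : C
  right : C
  hom : left ⟶ right

/-- Morphisms `f → f'` in the twisted arrow category: pairs `(u, v)` with `f' = u ≫ f ≫ v`. -/
@[ext]
structure TwHom {C : Type*} [Category C] (X Y : Tw C) where
  u : Y.left ⟶ X.left
  v : X.right ⟶ Y.right
  w : Y.hom = u ≫ X.hom ≫ v

instance {C : Type*} [Category C] : Category (Tw C) where
  Hom := TwHom
  id X := ⟨𝟙 _, 𝟙 _, by simp⟩
  comp {X Y Z} f g := ⟨g.u ≫ f.u, f.v ≫ g.v, by rw [g.w, f.w]; simp⟩
  id_comp f := by apply TwHom.ext <;> simp [CategoryStruct.id, CategoryStruct.comp]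
  comp_id f := by apply TwHom.ext <;> simp [CategoryStruct.id, CategoryStruct.comp]
  assoc f g h := by apply TwHom.ext <;> simp [CategoryStruct.comp]

/-- The defining property of the objects of `D_R` inside the twisted arrow category of
`F_≃(R)`. -/
def InD {R₀ R Fs : Type*} [Category R₀] [Category R] [Category Fs]
    (i₀ : R₀ ⥤ Fs) (i : Paths R ⥤ Fs) (X : Tw Fs) : Prop :=
  ∃ (z : Fs) (g : X.left ⟶ z) (h : z ⟶ X.right),
    X.hom = g ≫ h ∧ (IsIdArrow g ∨ InImg i₀ g) ∧ (IsIdArrow h ∨ FreeIso i h)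

/-- The category `D_R`, a full subcategory of the twisted arrow category of `F_≃(R)`. -/
abbrev DR {R₀ R Fs : Type*} [Category R₀] [Category R] [Category Fs]
    (i₀ : R₀ ⥤ Fs) (i : Paths R ⥤ Fs) := ObjectProperty.FullSubcategory (InD i₀ i)

variable (G : Type) [Group G] {Fs : Type} [SmallCategory Fs]

/-- The unique functor from the terminal category to the one-object category on `G`. -/
def cG : Discrete PUnit.{1} ⥤ SingleObj G := (Functor.const _).obj (SingleObj.star G)

/-- The image in `F_≃(G)` of the length-one path on the arrow `g : G`. -/
def freeArrow (i : Paths (SingleObj G) ⥤ Fs) (g : G) :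
    i.obj ((Paths.of (SingleObj G)).obj (SingleObj.star G)) ⟶ i.obj ((Paths.of (SingleObj G)).obj (SingleObj.star G)) :=
  i.map ((Paths.of (SingleObj G)).map (SingleObj.toEnd G g))

/-- The object of `D_G` given by the identity morphism of the unique object of `F_≃(G)`. -/
def idObj (i₀ : Discrete PUnit.{1} ⥤ Fs) (i : Paths (SingleObj G) ⥤ Fs) : DR i₀ i :=
  ⟨⟨_, _, 𝟙 (i.obj ((Paths.of (SingleObj G)).obj (SingleObj.star G)))⟩,
    ⟨_, 𝟙 _, 𝟙 _, by simp, Or.inl ⟨rfl, rfl⟩, Or.inl ⟨rfl, rfl⟩⟩⟩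

/-- The object of `D_G` given by the free isomorphism `[g]`. -/
def freeObj (i₀ : Discrete PUnit.{1} ⥤ Fs) (i : Paths (SingleObj G) ⥤ Fs) (g : G) : DR i₀ i :=
  ⟨⟨_, _, freeArrow G i g⟩,
    ⟨_, 𝟙 _, freeArrow G i g, by simp,
      Or.inl ⟨rfl, rfl⟩,
      Or.inr ⟨SingleObj.star G, SingleObj.star G, SingleObj.toEnd G g, rfl, rfl,
        inferInstance, by simp [freeArrow]⟩⟩⟩

/-! ### Auxiliary machinery -/

section Aux

open CategoryTheory

/-- The chaotic (indiscrete) category on a type. -/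
def Chaos (α : Type) : Type := α

instance {α : Type} : Category (Chaos α) where
  Hom _ _ := PUnit
  id _ := ⟨⟩
  comp _ _ := ⟨⟩

instance {α : Type} (x y : Chaos α) : Subsingleton (x ⟶ y) := ⟨fun _ _ => rfl⟩

/-- Any function gives a functor into the chaotic category. -/
def chaosOf {C : Type} [Category C] {α : Type} (f : C → α) : C ⥤ Chaos α where
  obj := f
  map _ := ⟨⟩

lemma chaos_funext {C : Type} [Category C] {α : Type} (F G : C ⥤ Chaos α)
    (h : ∀ x, F.obj x = G.obj x) : F = G :=
  CategoryTheory.Functor.ext h (fun _ _ _ => Subsingleton.elim _ _)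

lemma singleObj_eqToHom {M : Type} [Monoid M] {x y : SingleObj M} (h : x = y) :
    eqToHom h = 𝟙 (SingleObj.star M) := eqToHom_refl _ h

variable (G : Type) [Group G]

lemma composePath_mapPath_cG {x y : Discrete PUnit.{1}}
    (f : Quiver.Path x y) :
    composePath ((cG G).toPrefunctor.mapPath f) = 𝟙 (SingleObj.star G) := by
  induction f with
  | nil => rfl
  | cons p e ih =>
    simp only [Prefunctor.mapPath, composePath_cons, ih]
    have : (cG G).toPrefunctor.map e = 𝟙 (SingleObj.star G) := rfl
    rw [this]
    exact Category.id_comp _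

lemma hcomm2 : pathComposition (Discrete PUnit.{1}) ⋙ cG G
    = freeMap (cG G) ⋙ pathComposition (SingleObj G) := by
  refine CategoryTheory.Functor.ext (fun x => rfl) fun x y f => ?_
  have h1 : (pathComposition (Discrete PUnit.{1}) ⋙ cG G).map f = 𝟙 (SingleObj.star G) := rfl
  have h2 : (freeMap (cG G) ⋙ pathComposition (SingleObj G)).map f = 𝟙 (SingleObj.star G) :=
    composePath_mapPath_cG G f
  rw [h1, h2]
  show 𝟙 (SingleObj.star G) = 𝟙 (SingleObj.star G) ≫ 𝟙 (SingleObj.star G) ≫ 𝟙 (SingleObj.star G)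
  rw [Category.id_comp, Category.id_comp]

variable {Fs : Type} [SmallCategory Fs]

/-- All objects of `Fs` agree with the image of the unique object. -/
lemma all_obj_eq (i₀ : Discrete PUnit.{1} ⥤ Fs) (i : Paths (SingleObj G) ⥤ Fs)
    (hcomm : pathComposition (Discrete PUnit.{1}) ⋙ i₀ = freeMap (cG G) ⋙ i)
    (huniv : ∀ (T : Cat.{0, 0}) (q₀ : Discrete PUnit.{1} ⥤ T) (q : Paths (SingleObj G) ⥤ T),
      pathComposition (Discrete PUnit.{1}) ⋙ q₀ = freeMap (cG G) ⋙ q →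
      ∃! d : Fs ⥤ T, i₀ ⋙ d = q₀ ∧ i ⋙ d = q) (x : Fs) :
    x = i.obj ((Paths.of (SingleObj G)).obj (SingleObj.star G)) := by
  classical
  set s := i.obj ((Paths.of (SingleObj G)).obj (SingleObj.star G)) with hs
  have hobj : ∀ p : Paths (SingleObj G), i.obj p = s := fun p => rfl
  have hobj0 : ∀ p : Discrete PUnit.{1}, i₀.obj p = s := by
    intro p
    exact CategoryTheory.Functor.congr_obj hcomm p
  obtain ⟨d, hd, hu⟩ := huniv (Cat.of (Chaos Bool)) (chaosOf (fun _ => true))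
    (chaosOf (fun _ => true)) (chaos_funext _ _ fun _ => rfl)
  have e1 : (chaosOf (fun _ : Fs => true)) = d :=
    hu _ ⟨chaos_funext _ _ fun _ => rfl, chaos_funext _ _ fun _ => rfl⟩
  have e2 : (chaosOf (fun y : Fs => if y = s then true else false)) = d := by
    refine hu _ ⟨chaos_funext _ _ fun p => ?_, chaos_funext _ _ fun p => ?_⟩
    · show (if i₀.obj p = s then true else false) = true
      rw [if_pos (hobj0 p)]
    · show (if i.obj p = s then true else false) = true
      rw [if_pos (hobj p)]
  have e3 := CategoryTheory.Functor.congr_obj (e2.trans e1.symm) x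
  by_contra hne
  rw [show (chaosOf (fun y : Fs => if y = s then true else false)).obj x
      = (if x = s then true else false) from rfl, if_neg hne] at e3
  exact Bool.noConfusion e3

lemma tw_eq {C : Type} [Category C] {x y x' y' : C} (m : x ⟶ y) (m' : x' ⟶ y')
    (hx : x = x') (hy : y = y') (hm : m ≫ eqToHom hy = eqToHom hx ≫ m') :
    (⟨x, y, m⟩ : Tw C) = ⟨x', y', m'⟩ := by
  subst hx
  subst hy
  rw [eqToHom_refl, eqToHom_refl, Category.comp_id, Category.id_comp] at hm
  rw [hm]

lemma tw_hom_inj {C : Type} [Category C] {x y : C} {m m' : x ⟶ y}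
    (h : (⟨x, y, m⟩ : Tw C) = ⟨x, y, m'⟩) : m = m' := by
  rw [Tw.mk.injEq] at h
  exact eq_of_heq h.2.2

lemma d_freeArrow (i : Paths (SingleObj G) ⥤ Fs) (d : Fs ⥤ SingleObj G)
    (hd : i ⋙ d = pathComposition (SingleObj G)) (g : G) :
    d.map (freeArrow G i g) = SingleObj.toEnd G g := by
  have h := CategoryTheory.Functor.congr_hom hd ((Paths.of (SingleObj G)).map (SingleObj.toEnd G g))
  refine h.trans ?_
  rw [singleObj_eqToHom]
  show 𝟙 (SingleObj.star G) ≫ composePath ((SingleObj.toEnd G g).toPath)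
      ≫ 𝟙 (SingleObj.star G) = _
  rw [Category.id_comp, Category.comp_id, composePath_toPath]

lemma freeArrow_one (i₀ : Discrete PUnit.{1} ⥤ Fs) (i : Paths (SingleObj G) ⥤ Fs)
    (hcomm : pathComposition (Discrete PUnit.{1}) ⋙ i₀ = freeMap (cG G) ⋙ i) :
    freeArrow G i 1 = 𝟙 (i.obj ((Paths.of (SingleObj G)).obj (SingleObj.star G))) := by
  have h := CategoryTheory.Functor.congr_hom hcomm
    ((Paths.of (Discrete PUnit.{1})).map (𝟙 (Discrete.mk PUnit.unit)))
  have l1 : (pathComposition (Discrete PUnit.{1}) ⋙ i₀).map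
      ((Paths.of (Discrete PUnit.{1})).map (𝟙 (Discrete.mk PUnit.unit))) = 𝟙 (i₀.obj (Discrete.mk PUnit.unit)) := by
    show i₀.map (composePath ((𝟙 (Discrete.mk PUnit.unit)).toPath)) = _
    rw [composePath_toPath, CategoryTheory.Functor.map_id]
  rw [l1] at h
  have l2 : (freeMap (cG G) ⋙ i).map ((Paths.of (Discrete PUnit.{1})).map (𝟙 (Discrete.mk PUnit.unit)))
      = freeArrow G i 1 := rfl
  rw [l2] at h
  have h2 := congrArg (fun t => eqToHom (CategoryTheory.Functor.congr_obj hcomm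
      (Discrete.mk PUnit.unit)).symm ≫ t ≫ eqToHom (CategoryTheory.Functor.congr_obj hcomm
      (Discrete.mk PUnit.unit))) h.symm
  have key : ∀ {A B : Fs} (p : A = B) (q : B = A) (f : B ⟶ B),
      𝟙 A = eqToHom p ≫ f ≫ eqToHom q → f = 𝟙 B := by
    intro A B p q f hf
    subst p
    simpa using hf.symm
  exact key _ _ _ h

end Aux

open Classical in
/-- The map from the underlying set of `G` to the objects of `D_G`, sending the identity
element to the identity morphism of the unique object of `F_≃(G)` and each `g ≠ 1` to the
free isomorphism `[g]`. -/
noncomputable def toObjDG (i₀ : Discrete PUnit.{1} ⥤ Fs) (i : Paths (SingleObj G) ⥤ Fs)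
    (g : G) : DR i₀ i :=
  if g = 1 then idObj G i₀ i else freeObj G i₀ i g

/-- For a group `G` regarded as a one-object category, the map
`G → D_G` sending `e` to the identity morphism of the unique object of `F_≃(G)` and each
`g ≠ e` to the free isomorphism `[g]` is a bijection onto the objects of `D_G`. -/
theorem toObjDG_bijective
    (i₀ : Discrete PUnit.{1} ⥤ Fs) (i : Paths (SingleObj G) ⥤ Fs)
    (hcomm : pathComposition (Discrete PUnit.{1}) ⋙ i₀ = freeMap (cG G) ⋙ i)
    (huniv : ∀ (T : Cat.{0, 0}) (q₀ : Discrete PUnit.{1} ⥤ T) (q : Paths (SingleObj G) ⥤ T),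
      pathComposition (Discrete PUnit.{1}) ⋙ q₀ = freeMap (cG G) ⋙ q →
      ∃! d : Fs ⥤ T, i₀ ⋙ d = q₀ ∧ i ⋙ d = q) :
    Function.Bijective (toObjDG G i₀ i) := by
  classical
  obtain ⟨d, ⟨hd0, hd⟩, -⟩ := huniv (Cat.of (SingleObj G)) (cG G)
    (pathComposition (SingleObj G)) (hcomm2 G)
  constructor
  · intro g g' h
    by_cases hg : g = 1 <;> by_cases hg' : g' = 1
    · rw [hg, hg']
    · exfalso
      rw [toObjDG, if_pos hg, toObjDG, if_neg hg'] at h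
      have h2 := congrArg ObjectProperty.FullSubcategory.obj h
      have h3 : 𝟙 (i.obj ((Paths.of (SingleObj G)).obj (SingleObj.star G))) = freeArrow G i g' :=
        tw_hom_inj h2
      have h4 := congrArg d.map h3
      rw [CategoryTheory.Functor.map_id, d_freeArrow G i d hd g'] at h4
      exact absurd (show g' = 1 from h4.symm) hg'
    · exfalso
      rw [toObjDG, if_neg hg, toObjDG, if_pos hg'] at h
      have h2 := congrArg ObjectProperty.FullSubcategory.obj h
      have h3 : freeArrow G i g = 𝟙 (i.obj ((Paths.of (SingleObj G)).obj (SingleObj.star G))) :=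
        tw_hom_inj h2
      have h4 := congrArg d.map h3
      rw [CategoryTheory.Functor.map_id, d_freeArrow G i d hd g] at h4
      exact absurd (show g = 1 from h4) hg
    · rw [toObjDG, if_neg hg, toObjDG, if_neg hg'] at h
      have h2 := congrArg ObjectProperty.FullSubcategory.obj h
      have h3 : freeArrow G i g = freeArrow G i g' := tw_hom_inj h2
      have h4 := congrArg d.map h3
      rw [d_freeArrow G i d hd g, d_freeArrow G i d hd g'] at h4
      exact h4
  · rintro ⟨⟨x, y, m⟩, z, gg, hh, hfact, hgor, hhor⟩
    have hx := all_obj_eq G i₀ i hcomm huniv x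
    have hy := all_obj_eq G i₀ i hcomm huniv y
    obtain ⟨q, hq⟩ : ∃ p : x = z, gg = eqToHom p := by
      rcases hgor with ⟨p, hp⟩ | ⟨a, b, k, ha, hb, hk⟩
      · exact ⟨p, hp⟩
      · obtain rfl : a = b := Subsingleton.elim a b
        have hk1 : k = 𝟙 a := Subsingleton.elim _ _
        refine ⟨(ha.symm.trans hb : x = z), ?_⟩
        rw [hk, hk1, CategoryTheory.Functor.map_id, Category.id_comp, eqToHom_trans]
    rcases hhor with ⟨p, hp⟩ | ⟨a, b, f, ha, hb, hiso, hf⟩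
    · refine ⟨1, ?_⟩
      rw [toObjDG, if_pos rfl]
      apply ObjectProperty.FullSubcategory.ext
      show (⟨_, _, 𝟙 (i.obj ((Paths.of (SingleObj G)).obj (SingleObj.star G)))⟩ : Tw Fs) = ⟨x, y, m⟩
      refine tw_eq _ _ hx.symm hy.symm ?_
      rw [show m = gg ≫ hh from hfact, hq, hp, Category.id_comp, eqToHom_trans, eqToHom_trans]
    · obtain rfl : a = SingleObj.star G := rfl
      obtain rfl : b = SingleObj.star G := rfl
      have hfree : i.map ((Paths.of (SingleObj G)).map f) = freeArrow G i ((SingleObj.toEnd G).symm f) := rfl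
      refine ⟨(SingleObj.toEnd G).symm f, ?_⟩
      by_cases h1 : (SingleObj.toEnd G).symm f = 1
      · rw [toObjDG, if_pos h1]
        rw [h1] at hfree
        rw [freeArrow_one G i₀ i hcomm] at hfree
        apply ObjectProperty.FullSubcategory.ext
        show (⟨_, _, 𝟙 (i.obj ((Paths.of (SingleObj G)).obj (SingleObj.star G)))⟩ : Tw Fs) = ⟨x, y, m⟩
        refine tw_eq _ _ hx.symm hy.symm ?_
        rw [show m = gg ≫ hh from hfact, hq, hf, hfree]
        simp
      · rw [toObjDG, if_neg h1]
        apply ObjectProperty.FullSubcategory.ext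
        show (⟨_, _, freeArrow G i ((SingleObj.toEnd G).symm f)⟩ : Tw Fs) = ⟨x, y, m⟩
        refine tw_eq _ _ hx.symm hy.symm ?_
        rw [show m = gg ≫ hh from hfact, hq, hf, hfree]
        simp


end Unrolling
end

section
/- Let G be a group regarded as a one-object category and let g, h be non-identity elements of G. In the category D_G: (i) if g ≠ h there are no morphisms from the object [g] to the object [h]; (ii) the only endomorphism of the object [g] is its identity; (iii) there are no morphisms from the object [g] to the object given by the identity morphism of the unique object; and (iv) the only endomorphism of the identity object is its identity. -/
open CategoryTheory

universe u

namespace Unrolling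

variable (G : Type) [Group G] {Fs : Type} [SmallCategory Fs]

/-! ### Auxiliary material for the proof -/

/-- The concrete model: free monoid on the non-identity elements of `G`. -/
abbrev MG := FreeMonoid {g : G // g ≠ 1}

open Classical in
/-- The comparison prefunctor to the concrete model. -/
noncomputable def jPre : SingleObj G ⥤q SingleObj (MG G) where
  obj _ := SingleObj.star _
  map := fun {_ _} (g : G) => ((if h : g = 1 then 1 else FreeMonoid.of ⟨g, h⟩ : MG G) : _)

/-- The comparison functor from the path category to the concrete model. -/
noncomputable def jFun : Paths (SingleObj G) ⥤ SingleObj (MG G) := Paths.lift (jPre G)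

/-- The comparison functor from the terminal category to the concrete model. -/
noncomputable def j0Fun : Discrete PUnit.{1} ⥤ SingleObj (MG G) :=
  (Functor.const _).obj (SingleObj.star _)

lemma eqToHom_single {N : Type} [Monoid N] {x y : SingleObj N} (h : x = y) :
    eqToHom h = (1 : N) := by subst h; rfl

lemma sandwich_id {C : Type*} [Category C] {A B : C} (p : A = B) (q : B = A) (m : B ⟶ B)
    (h : 𝟙 A = eqToHom p ≫ m ≫ eqToHom q) : m = 𝟙 B := by
  subst p
  simpa using h.symm

open Classical in
lemma jFun_toEnd (g : G) :
    (jFun G).map ((Paths.of (SingleObj G)).map (SingleObj.toEnd G g)) =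
      ((if h : g = 1 then 1 else FreeMonoid.of ⟨g, h⟩ : MG G) : _) := by
  show (Paths.lift (jPre G)).map (Quiver.Hom.toPath _) = _
  exact (Paths.lift_toPath (jPre G) (SingleObj.toEnd G g)).trans rfl

lemma jsq : pathComposition (Discrete PUnit.{1}) ⋙ j0Fun G = freeMap (cG G) ⋙ jFun G := by
  refine Paths.ext_functor (funext fun x => ?_) ?_
  · rfl
  · intro a b e
    have h1 : (pathComposition (Discrete PUnit.{1}) ⋙ j0Fun G).map e.toPath = 𝟙 _ := by
      show (j0Fun G).map (composePath (Quiver.Hom.toPath e)) = _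
      rw [composePath_toPath]
      rfl
    have h2 : (freeMap (cG G) ⋙ jFun G).map e.toPath =
        (jFun G).map ((Paths.of (SingleObj G)).map (SingleObj.toEnd G 1)) := rfl
    rw [h1, h2, jFun_toEnd, dif_pos rfl, eqToHom_single]
    show (1 : MG G) = ((1 : MG G) * (1 : MG G)) * (1 : MG G)
    simp

variable {G}

/-- The monoid homomorphism underlying the inverse comparison functor. -/
def ePhi (i : Paths (SingleObj G) ⥤ Fs) :
    MG G →* End (i.obj ((Paths.of (SingleObj G)).obj (SingleObj.star G))) :=
  FreeMonoid.lift fun s => (i.map ((Paths.of (SingleObj G)).map (SingleObj.toEnd G s.1)) : End _)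

/-- The inverse comparison functor. -/
def eFun (i : Paths (SingleObj G) ⥤ Fs) : SingleObj (MG G) ⥤ Fs where
  obj _ := i.obj ((Paths.of (SingleObj G)).obj (SingleObj.star G))
  map f := ePhi i f
  map_id _ := (ePhi i).map_one
  map_comp {x y z} f g := by
    show ePhi i (f ≫ g) = ePhi i f ≫ ePhi i g
    rw [SingleObj.comp_as_mul, map_mul]
    rfl

variable {i₀ : Discrete PUnit.{1} ⥤ Fs} {i : Paths (SingleObj G) ⥤ Fs}

lemma i_map_one
    (hcomm : pathComposition (Discrete PUnit.{1}) ⋙ i₀ = freeMap (cG G) ⋙ i) :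
    i.map ((Paths.of (SingleObj G)).map (SingleObj.toEnd G (1 : G))) = 𝟙 _ := by
  have h := Functor.congr_hom hcomm
    ((Paths.of (Discrete PUnit.{1})).map (𝟙 (⟨PUnit.unit⟩ : Discrete PUnit.{1})))
  have h1 : (pathComposition (Discrete PUnit.{1}) ⋙ i₀).map
      ((Paths.of (Discrete PUnit.{1})).map (𝟙 (⟨PUnit.unit⟩ : Discrete PUnit.{1}))) = 𝟙 _ := by
    show i₀.map (composePath (Quiver.Hom.toPath _)) = _
    rw [composePath_toPath]
    exact i₀.map_id _
  have h2 : (freeMap (cG G) ⋙ i).map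
      ((Paths.of (Discrete PUnit.{1})).map (𝟙 (⟨PUnit.unit⟩ : Discrete PUnit.{1}))) =
      i.map ((Paths.of (SingleObj G)).map (SingleObj.toEnd G (1 : G))) := rfl
  rw [h1, h2] at h
  exact sandwich_id _ _ _ h

lemma je_arrow (hcomm : pathComposition (Discrete PUnit.{1}) ⋙ i₀ = freeMap (cG G) ⋙ i)
    (g : G) :
    (eFun i).map ((jFun G).map ((Paths.of (SingleObj G)).map (SingleObj.toEnd G g))) =
      i.map ((Paths.of (SingleObj G)).map (SingleObj.toEnd G g)) := by
  classical
  rw [jFun_toEnd]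
  by_cases h : g = 1
  · subst h
    rw [dif_pos rfl, i_map_one hcomm]
    exact (ePhi i).map_one
  · rw [dif_neg h]
    rfl

lemma hje (hcomm : pathComposition (Discrete PUnit.{1}) ⋙ i₀ = freeMap (cG G) ⋙ i) :
    jFun G ⋙ eFun i = i := by
  refine Paths.ext_functor (funext fun x => ?_) ?_
  · rfl
  · intro a b e
    have h0 : (jFun G ⋙ eFun i).map e.toPath =
        (eFun i).map ((jFun G).map ((Paths.of (SingleObj G)).map (SingleObj.toEnd G e))) := rfl
    rw [h0, je_arrow hcomm]
    have h2 : i.map e.toPath = i.map ((Paths.of (SingleObj G)).map (SingleObj.toEnd G e)) := rfl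
    rw [h2]
    have e : ∀ {X : Fs} (p q : X = X) (m : X ⟶ X), m = eqToHom p ≫ m ≫ eqToHom q := by
      intros; simp
    exact e _ _ _

lemma hj0e (hcomm : pathComposition (Discrete PUnit.{1}) ⋙ i₀ = freeMap (cG G) ⋙ i) :
    j0Fun G ⋙ eFun i = i₀ := by
  have hobj : ∀ X, (j0Fun G ⋙ eFun i).obj X = i₀.obj X := fun X =>
    (Functor.congr_obj hcomm ((Paths.of (Discrete PUnit.{1})).obj X)).symm
  refine CategoryTheory.Functor.ext hobj ?_
  intro X Y f
  have hXY : X = Y := Subsingleton.elim _ _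
  subst hXY
  have hf : f = 𝟙 X := Subsingleton.elim _ _
  subst hf
  have h1 : (j0Fun G ⋙ eFun i).map (𝟙 X) = 𝟙 _ := CategoryTheory.Functor.map_id _ _
  rw [h1, i₀.map_id]
  simp

lemma freeMonoid_of_eq_mul {α : Type} {x y : α} {a b : FreeMonoid α}
    (h : FreeMonoid.of x = b * FreeMonoid.of y * a) : a = 1 ∧ b = 1 ∧ x = y := by
  have h' := congrArg FreeMonoid.toList h
  rw [FreeMonoid.toList_mul, FreeMonoid.toList_mul, FreeMonoid.toList_of,
    FreeMonoid.toList_of] at h'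
  have hl := congrArg List.length h'
  simp only [List.length_append, List.length_cons, List.length_nil] at hl
  have ha : (FreeMonoid.toList a).length = 0 := by omega
  have hb : (FreeMonoid.toList b).length = 0 := by omega
  have ha' : FreeMonoid.toList a = [] := List.eq_nil_of_length_eq_zero ha
  have hb' : FreeMonoid.toList b = [] := List.eq_nil_of_length_eq_zero hb
  rw [ha', hb'] at h'
  simp at h'
  exact ⟨FreeMonoid.toList.injective ha', FreeMonoid.toList.injective hb', h'⟩

lemma freeMonoid_one_ne_mul {α : Type} {y : α} {a b : FreeMonoid α}
    (h : (1 : FreeMonoid α) = b * FreeMonoid.of y * a) : False := by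
  have h' := congrArg List.length (congrArg FreeMonoid.toList h)
  rw [FreeMonoid.toList_mul, FreeMonoid.toList_mul, FreeMonoid.toList_of,
    FreeMonoid.toList_one] at h'
  simp only [List.length_append, List.length_cons, List.length_nil] at h'
  omega

lemma freeMonoid_one_eq_mul {α : Type} {a b : FreeMonoid α}
    (h : (1 : FreeMonoid α) = b * a) : a = 1 ∧ b = 1 := by
  have h' := congrArg FreeMonoid.toList h
  rw [FreeMonoid.toList_mul, FreeMonoid.toList_one] at h'
  obtain ⟨hb, ha⟩ := (List.append_eq_nil_iff).mp h'.symm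
  exact ⟨FreeMonoid.toList.injective ha, FreeMonoid.toList.injective hb⟩

variable (G)

/-- Let `G` be a group regarded as a one-object category and `g`, `h`
non-identity elements of `G`.  In `D_G`: (i) if `g ≠ h` there are no morphisms `[g] ⟶ [h]`;
(ii) the only endomorphism of `[g]` is the identity; (iii) there are no morphisms from `[g]`
to the identity object; (iv) the only endomorphism of the identity object is the identity. -/
theorem DG_hom_structure
    (i₀ : Discrete PUnit.{1} ⥤ Fs) (i : Paths (SingleObj G) ⥤ Fs)
    (hcomm : pathComposition (Discrete PUnit.{1}) ⋙ i₀ = freeMap (cG G) ⋙ i)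
    (huniv : ∀ (T : Cat.{0, 0}) (q₀ : Discrete PUnit.{1} ⥤ T) (q : Paths (SingleObj G) ⥤ T),
      pathComposition (Discrete PUnit.{1}) ⋙ q₀ = freeMap (cG G) ⋙ q →
      ∃! d : Fs ⥤ T, i₀ ⋙ d = q₀ ∧ i ⋙ d = q) :
    (∀ (g h : G), g ≠ 1 → h ≠ 1 → g ≠ h →
      IsEmpty (freeObj G i₀ i g ⟶ freeObj G i₀ i h)) ∧
    (∀ (g : G), g ≠ 1 → ∀ t : freeObj G i₀ i g ⟶ freeObj G i₀ i g, t = 𝟙 _) ∧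
    (∀ (g : G), g ≠ 1 → IsEmpty (freeObj G i₀ i g ⟶ idObj G i₀ i)) ∧
    (∀ t : idObj G i₀ i ⟶ idObj G i₀ i, t = 𝟙 _) := by
  classical
  obtain ⟨d, ⟨hd0, hd⟩, -⟩ :
    ∃! d : Fs ⥤ SingleObj (MG G), i₀ ⋙ d = j0Fun G ∧ i ⋙ d = jFun G :=
    huniv (Cat.of (SingleObj (MG G))) (j0Fun G) (jFun G) (jsq G)
  obtain ⟨d', hd'1, hd'u⟩ : ∃! d : Fs ⥤ Fs, i₀ ⋙ d = i₀ ∧ i ⋙ d = i :=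
    huniv (Cat.of Fs) i₀ i hcomm
  have hc : d ⋙ eFun i = 𝟭 Fs := by
    have h1 := hd'u (d ⋙ eFun i)
      ⟨by rw [← Functor.assoc, hd0, hj0e hcomm], by rw [← Functor.assoc, hd, hje hcomm]⟩
    have h2 := hd'u (𝟭 Fs) ⟨Functor.comp_id _, Functor.comp_id _⟩
    rw [h1, h2]
  have cancel : ∀ u : i.obj ((Paths.of (SingleObj G)).obj (SingleObj.star G)) ⟶
      i.obj ((Paths.of (SingleObj G)).obj (SingleObj.star G)),
      d.map u = 𝟙 (d.obj (i.obj ((Paths.of (SingleObj G)).obj (SingleObj.star G)))) → u = 𝟙 _ := by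
    intro u hu
    have h := Functor.congr_hom hc u
    rw [Functor.comp_map, hu, (eFun i).map_id, Functor.id_map] at h
    exact sandwich_id _ _ _ h
  have dfree : ∀ (g : G) (hg : g ≠ 1), d.map (freeArrow G i g) =
      (show d.obj (i.obj ((Paths.of (SingleObj G)).obj (SingleObj.star G))) ⟶
        d.obj (i.obj ((Paths.of (SingleObj G)).obj (SingleObj.star G))) from
          (FreeMonoid.of ⟨g, hg⟩ : MG G)) := by
    intro g hg
    have h := Functor.congr_hom hd ((Paths.of (SingleObj G)).map (SingleObj.toEnd G g))
    rw [jFun_toEnd, dif_neg hg, eqToHom_single] at h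
    have h2 : (d.map (freeArrow G i g) : MG G) =
        ((1 : MG G) * FreeMonoid.of ⟨g, hg⟩) * (1 : MG G) := h
    rw [one_mul, mul_one] at h2
    exact h2
  -- the common analysis of a twisted-arrow morphism
  have hmain : ∀ (g h : G), g ≠ 1 → h ≠ 1 →
      ∀ t : TwHom (freeObj G i₀ i g).obj (freeObj G i₀ i h).obj,
      t.u = 𝟙 _ ∧ t.v = 𝟙 _ ∧ g = h := by
    intro g h hg hh t
    have hw : freeArrow G i h = t.u ≫ freeArrow G i g ≫ t.v := t.w
    have e1 : d.map (freeArrow G i h) = d.map t.u ≫ d.map (freeArrow G i g) ≫ d.map t.v :=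
      (congrArg d.map hw).trans ((d.map_comp _ _).trans (congrArg (d.map t.u ≫ ·) (d.map_comp _ _)))
    have hw2 : (FreeMonoid.of ⟨h, hh⟩ : MG G) =
        (show MG G from d.map t.v) * FreeMonoid.of ⟨g, hg⟩ * (show MG G from d.map t.u) := by
      exact (dfree h hh).symm.trans
        (e1.trans (congrArg (fun m => d.map t.u ≫ m ≫ d.map t.v) (dfree g hg)))
    obtain ⟨ha, hb, hxy⟩ := freeMonoid_of_eq_mul (x := (⟨h, hh⟩ : {g : G // g ≠ 1}))
      (y := (⟨g, hg⟩ : {g : G // g ≠ 1}))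
      (a := (d.map (TwHom.u t) : MG G)) (b := (d.map (TwHom.v t) : MG G)) hw2
    have hgh : g = h := (congrArg Subtype.val hxy).symm
    exact ⟨cancel _ ha, cancel _ hb, hgh⟩
  refine ⟨?_, ?_, ?_, ?_⟩
  · intro g h hg hh hne
    exact ⟨fun t => hne (hmain g h hg hh t.hom).2.2⟩
  · intro g hg t
    obtain ⟨hu, hv, -⟩ := hmain g g hg hg t.hom
    exact InducedCategory.hom_ext (TwHom.ext hu hv)
  · intro g hg
    refine ⟨fun t => ?_⟩
    have key : ∀ u v : i.obj ((Paths.of (SingleObj G)).obj (SingleObj.star G)) ⟶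
        i.obj ((Paths.of (SingleObj G)).obj (SingleObj.star G)),
        𝟙 (i.obj ((Paths.of (SingleObj G)).obj (SingleObj.star G))) = u ≫ freeArrow G i g ≫ v → False := by
      intro u v hw
      have hw2 := congrArg (fun m => d.map m) hw
      simp only [CategoryTheory.Functor.map_comp, CategoryTheory.Functor.map_id] at hw2
      rw [dfree g hg] at hw2
      exact freeMonoid_one_ne_mul (y := (⟨g, hg⟩ : {g : G // g ≠ 1}))
        (a := (d.map u : MG G)) (b := (d.map v : MG G)) hw2
    exact key t.hom.u t.hom.v t.hom.w
  · intro t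
    have key : ∀ u v : i.obj ((Paths.of (SingleObj G)).obj (SingleObj.star G)) ⟶
        i.obj ((Paths.of (SingleObj G)).obj (SingleObj.star G)),
        𝟙 (i.obj ((Paths.of (SingleObj G)).obj (SingleObj.star G))) =
          u ≫ 𝟙 (i.obj ((Paths.of (SingleObj G)).obj (SingleObj.star G))) ≫ v →
        u = 𝟙 (i.obj ((Paths.of (SingleObj G)).obj (SingleObj.star G))) ∧
          v = 𝟙 (i.obj ((Paths.of (SingleObj G)).obj (SingleObj.star G))) := by
      intro u v hw
      rw [Category.id_comp] at hw
      have hw2 := congrArg (fun m => d.map m) hw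
      simp only [CategoryTheory.Functor.map_comp, CategoryTheory.Functor.map_id] at hw2
      obtain ⟨ha, hb⟩ := freeMonoid_one_eq_mul (α := {g : G // g ≠ 1})
        (a := (d.map u : MG G)) (b := (d.map v : MG G)) hw2
      exact ⟨cancel _ ha, cancel _ hb⟩
    obtain ⟨ha, hb⟩ := key t.hom.u t.hom.v t.hom.w
    exact InducedCategory.hom_ext (TwHom.ext ha hb)


end Unrolling
end
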